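/- Suppose (X,d_X) and (Y,d_Y) are compact metric spaces, and for each k ∈ ℕ, f_k : D_k → Y is an η-quasi-Möbius map defined on a subset D_k ⊆ X, where the Hausdorff distance dist_H(D_k, X) → 0 as k → ∞. Suppose there is δ > 0 and for each k triples (x¹_k, x²_k, x³_k) in D_k and (y¹_k, y²_k, y³_k) in Y with f_k(xⁱ_k) = yⁱ_k and d_X(xⁱ_k, xʲ_k) ≥ δ and d_Y(yⁱ_k, yʲ_k) ≥ δ for all i ≠ j. Then there is a quasi-Möbius map f : X → Y and a strictly increasing sequence (k_ν) such that sup_{x ∈ D_{k_ν}} d_Y(f_{k_ν}(x), f(x)) → 0 as ν → ∞. If in addition dist_H(f_k(D_k), Y) → 0 as k → ∞, then the limit f can be taken to be a quasi-Möbius homeomorphism of X onto Y. -/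

import Mathlib

open Metric Set MeasureTheory Filter Topology

noncomputable section

/-- Cross-ratio of a four-tuple of points in a metric space. -/
def crossRatio {Z : Type*} [MetricSpace Z] (z₁ z₂ z₃ z₄ : Z) : NNReal :=
  nndist z₁ z₃ * nndist z₂ z₄ / (nndist z₁ z₄ * nndist z₂ z₃)

/-- `f : X → Y` is `η`-quasi-Möbius. -/
def IsQuasiMobius {X Y : Type*} [MetricSpace X] [MetricSpace Y]
    (η : NNReal ≃ₜ NNReal) (f : X → Y) : Prop :=
  Function.Injective f ∧
  ∀ x₁ x₂ x₃ x₄ : X, x₁ ≠ x₂ → x₁ ≠ x₃ → x₁ ≠ x₄ → x₂ ≠ x₃ → x₂ ≠ x₄ → x₃ ≠ x₄ →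
    crossRatio (f x₁) (f x₂) (f x₃) (f x₄) ≤ η (crossRatio x₁ x₂ x₃ x₄)

/-- `f : X → Y` is `η`-quasi-symmetric. -/
def IsQuasiSymmetric {X Y : Type*} [MetricSpace X] [MetricSpace Y]
    (η : NNReal ≃ₜ NNReal) (f : X → Y) : Prop :=
  Function.Injective f ∧
  ∀ x₁ x₂ x₃ : X, x₁ ≠ x₂ → x₁ ≠ x₃ → x₂ ≠ x₃ →
    nndist (f x₁) (f x₂) / nndist (f x₁) (f x₃) ≤ η (nndist x₁ x₂ / nndist x₁ x₃)

/-- Lebesgue covering dimension is at most `n`. -/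
def covDimLE (X : Type*) [TopologicalSpace X] (n : ℕ) : Prop :=
  ∀ 𝒰 : Set (Set X), (∀ U ∈ 𝒰, IsOpen U) → ⋃₀ 𝒰 = univ →
    ∃ 𝒱 : Set (Set X), (∀ V ∈ 𝒱, IsOpen V) ∧ ⋃₀ 𝒱 = univ ∧
      (∀ V ∈ 𝒱, ∃ U ∈ 𝒰, V ⊆ U) ∧
      ∀ x : X, {V ∈ 𝒱 | x ∈ V}.encard ≤ (n + 1 : ℕ)

/-- Lebesgue covering (topological) dimension. -/
noncomputable def topDim (X : Type*) [TopologicalSpace X] : ℕ∞ :=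
  ⨅ (n : ℕ) (_ : covDimLE X n), (n : ℕ∞)

/-- Ahlfors `Q`-regularity. -/
def AhlforsRegular (Q : ℝ) (Z : Type*) [MetricSpace Z] [MeasurableSpace Z] [BorelSpace Z] :
    Prop :=
  0 < Q ∧ CompleteSpace Z ∧ 0 < Metric.diam (univ : Set Z) ∧
  ∃ C : ℝ, 1 ≤ C ∧ ∀ (z : Z) (R : ℝ), 0 < R → R ≤ Metric.diam (univ : Set Z) →
    ENNReal.ofReal (R ^ Q / C) ≤ μH[Q] (Metric.ball z R) ∧
    μH[Q] (Metric.ball z R) ≤ ENNReal.ofReal (C * R ^ Q)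

/-- The action of `G` on `Z` is by homeomorphisms, each `η`-quasi-Möbius. -/
def QMAction (η : NNReal ≃ₜ NNReal) (G Z : Type*) [Group G] [MulAction G Z]
    [MetricSpace Z] : Prop :=
  (∀ g : G, Continuous fun z : Z => g • z) ∧
  ∀ g : G, IsQuasiMobius η (fun z : Z => g • z)

/-- Cocompactness of the induced action on distinct triples (for compact `Z`). -/
def TriplesCocompact (G Z : Type*) [Group G] [MulAction G Z] [MetricSpace Z] : Prop :=
  ∃ δ > (0:ℝ), ∀ z₁ z₂ z₃ : Z, z₁ ≠ z₂ → z₁ ≠ z₃ → z₂ ≠ z₃ →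
    ∃ g : G, δ ≤ dist (g • z₁) (g • z₂) ∧ δ ≤ dist (g • z₁) (g • z₃) ∧
      δ ≤ dist (g • z₂) (g • z₃)

def IsStableValue {X Y : Type*} [TopologicalSpace X] [MetricSpace Y]
    (f : X → Y) (y : Y) : Prop :=
  ∃ ε > (0:ℝ), ∀ g : X → Y, Continuous g → (∀ x, dist (f x) (g x) < ε) → y ∈ range g

def IsStableValueOn {X Y : Type*} [TopologicalSpace X] [MetricSpace Y]
    (f : X → Y) (s : Set X) (y : Y) : Prop :=
  IsStableValue (fun x : s => f x) y

def IsStablePoint {X Y : Type*} [TopologicalSpace X] [MetricSpace Y]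
    (f : X → Y) (x : X) : Prop :=
  ∀ U ∈ nhds x, IsStableValueOn f U (f x)

/-- `f` is a regular map. -/
def IsRegularMap {X Y : Type*} [MetricSpace X] [MetricSpace Y] (f : X → Y) : Prop :=
  (∃ L : NNReal, LipschitzWith L f) ∧
  ∃ N : ℕ, ∀ (y : Y) (r : ℝ), 0 < r → ∃ t : Finset X, t.card ≤ N ∧
    f ⁻¹' Metric.ball y r ⊆ ⋃ c ∈ t, Metric.ball c r

/-- A metric space is doubling. -/
def MetricDoubling (Y : Type*) [MetricSpace Y] : Prop :=
  ∃ M : ℕ, ∀ (y : Y) (R : ℝ), ∃ t : Finset Y, t.card ≤ M ∧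
    Metric.ball y R ⊆ ⋃ c ∈ t, Metric.ball c (R / 2)

/-- A metric space is uniformly perfect. -/
def UniformlyPerfect (Z : Type*) [MetricSpace Z] : Prop :=
  ∃ lam : ℝ, 1 ≤ lam ∧ ∀ (z : Z) (R : ℝ), 0 < R → R ≤ Metric.diam (univ : Set Z) →
    (Metric.closedBall z R \ Metric.ball z (R / lam)).Nonempty

/-- `(S, q)` is a weak tangent of `Z`: `S` is complete and some rescalings
`(λ_k Z, p_k)` converge to `(S, q)` in the pointed Gromov–Hausdorff sense. -/
def PointedWeakTangent (Z : Type*) [MetricSpace Z] (S : Type*) [MetricSpace S]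
    (q : S) : Prop :=
  CompleteSpace S ∧
  ∃ (lam : ℕ → ℝ) (p : ℕ → Z), (∀ k, 0 < lam k) ∧ Tendsto lam atTop atTop ∧
    ∀ R > (0:ℝ), ∀ ε > (0:ℝ), ∃ (N : ℕ) (M : Set S),
      q ∈ M ∧ M ⊆ Metric.ball q R ∧ (∀ s ∈ Metric.ball q R, ∃ m ∈ M, dist s m ≤ ε) ∧
      ∀ k ≥ N, ∃ (Mk : Set Z) (F : Z → S),
        p k ∈ Mk ∧ (∀ z ∈ Mk, lam k * dist z (p k) < R) ∧
        (∀ z : Z, lam k * dist z (p k) < R → ∃ w ∈ Mk, lam k * dist z w ≤ ε) ∧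
        F (p k) = q ∧ Set.BijOn F Mk M ∧
        ∀ a ∈ Mk, ∀ b ∈ Mk, |lam k * dist a b - dist (F a) (F b)| < ε

/-- `f` is `η`-quasi-Möbius on the subset `D`. -/
def IsQuasiMobiusOn {X Y : Type*} [MetricSpace X] [MetricSpace Y]
    (η : NNReal ≃ₜ NNReal) (f : X → Y) (D : Set X) : Prop :=
  Set.InjOn f D ∧
  ∀ x₁ ∈ D, ∀ x₂ ∈ D, ∀ x₃ ∈ D, ∀ x₄ ∈ D,
    x₁ ≠ x₂ → x₁ ≠ x₃ → x₁ ≠ x₄ → x₂ ≠ x₃ → x₂ ≠ x₄ → x₃ ≠ x₄ →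
      crossRatio (f x₁) (f x₂) (f x₃) (f x₄) ≤ η (crossRatio x₁ x₂ x₃ x₄)

lemma eta_map_zero (η : NNReal ≃ₜ NNReal) : η 0 = 0 := by
  by_contra h
  set a := η.symm 0 with ha
  have haz : a ≠ 0 := by
    intro h0
    have hsymm : η.symm 0 = 0 := ha ▸ h0
    exact h (by nth_rewrite 1 [← hsymm]; exact η.apply_symm_apply 0)
  have hpr : IsPreconnected ({a}ᶜ : Set NNReal) := by
    have h1 : IsPreconnected (Ioi (0:NNReal)) := isPreconnected_Ioi
    have h2 : IsPreconnected (η.symm '' Ioi 0) := h1.image _ η.symm.continuous.continuousOn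
    have himg : η.symm '' Ioi 0 = {a}ᶜ := by
      apply Set.eq_of_subset_of_subset
      · rintro x ⟨y, hy, rfl⟩
        simp only [mem_compl_iff, mem_singleton_iff]
        intro hxa
        have hy0 : y = 0 := by
          have := congrArg η hxa
          simpa [ha] using this
        rw [hy0] at hy; exact lt_irrefl _ (mem_Ioi.mp hy)
      · intro x hx
        refine ⟨η x, ?_, η.symm_apply_apply x⟩
        simp only [mem_Ioi]
        refine pos_iff_ne_zero.mpr fun h0 => hx ?_
        have : x = η.symm 0 := by rw [← h0, η.symm_apply_apply]
        simp [ha, this]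
    rwa [himg] at h2
  have hOC : ({a}ᶜ : Set NNReal).OrdConnected := hpr.ordConnected
  have h0mem : (0:NNReal) ∈ ({a}ᶜ : Set NNReal) := by simpa using (Ne.symm haz)
  have h1mem : (a+1:NNReal) ∈ ({a}ᶜ : Set NNReal) := by
    simp only [mem_compl_iff, mem_singleton_iff]
    intro hh; exact one_ne_zero (add_eq_left.mp hh)
  have : a ∈ ({a}ᶜ : Set NNReal) :=
    hOC.out h0mem h1mem ⟨zero_le, le_add_of_nonneg_right zero_le⟩
  simp at this

lemma eta_small (η : NNReal ≃ₜ NNReal) {c : NNReal} (hc : 0 < c) :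
    ∃ t : NNReal, 0 < t ∧ ∀ s, s ≤ t → η s ≤ c := by
  have h0 : Tendsto η (𝓝 0) (𝓝 0) := by
    simpa [eta_map_zero η] using η.continuous.tendsto 0
  have hev : ∀ᶠ s in 𝓝 (0:NNReal), η s < c := h0.eventually_lt_const hc
  obtain ⟨t, ht, hsub⟩ := NNReal.nhds_zero_basis.eventually_iff.mp hev
  refine ⟨t/2, by positivity, fun s hs => ?_⟩
  exact le_of_lt (hsub (lt_of_le_of_lt hs (NNReal.half_lt_self ht.ne')))

lemma exists_two_good (B : Fin 3 → Prop) [DecidablePred B]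
    (h : ∀ i j : Fin 3, i ≠ j → B i → B j → False) :
    ∃ i j : Fin 3, i ≠ j ∧ ¬B i ∧ ¬B j := by
  by_cases h0 : B 0
  · exact ⟨1, 2, by decide, fun h1 => h 0 1 (by decide) h0 h1, fun h2 => h 0 2 (by decide) h0 h2⟩
  · by_cases h1 : B 1
    · exact ⟨0, 2, by decide, h0, fun h2 => h 1 2 (by decide) h1 h2⟩
    · exact ⟨0, 1, by decide, h0, h1⟩

lemma crossRatio_coe {Z : Type*} [MetricSpace Z] (z₁ z₂ z₃ z₄ : Z) :
    ((crossRatio z₁ z₂ z₃ z₄ : NNReal) : ℝ)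
      = dist z₁ z₃ * dist z₂ z₄ / (dist z₁ z₄ * dist z₂ z₃) := by
  rw [crossRatio]
  push_cast [coe_nndist]
  ring

set_option maxHeartbeats 1000000 in
/-- **Bonk–Kleiner, Lemma 2.1.** Uniformly quasi-Möbius maps defined on denser and
denser subsets of a compact metric space `X`, mapping uniformly separated triples to
uniformly separated triples, subconverge uniformly to a quasi-Möbius map `f : X → Y`;
if moreover the images become dense in `Y`, the limit can be taken to be a
quasi-Möbius homeomorphism onto `Y`. -/
theorem qm_maps_on_dense_subsets_subconverge {X Y : Type*} [MetricSpace X] [MetricSpace Y]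
    [CompactSpace X] [CompactSpace Y]
    (η : NNReal ≃ₜ NNReal) (D : ℕ → Set X) (f : ℕ → X → Y)
    (hqm : ∀ k, IsQuasiMobiusOn η (f k) (D k))
    (hdense : Tendsto (fun k => hausdorffDist (D k) (univ : Set X)) atTop (nhds 0))
    (δ : ℝ) (hδ : 0 < δ) (x : ℕ → Fin 3 → X) (y : ℕ → Fin 3 → Y)
    (hxD : ∀ k i, x k i ∈ D k) (hfx : ∀ k i, f k (x k i) = y k i)
    (hsepx : ∀ k, ∀ i j : Fin 3, i ≠ j → δ ≤ dist (x k i) (x k j))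
    (hsepy : ∀ k, ∀ i j : Fin 3, i ≠ j → δ ≤ dist (y k i) (y k j)) :
    (∃ (η' : NNReal ≃ₜ NNReal) (F : X → Y) (φ : ℕ → ℕ), StrictMono φ ∧
      IsQuasiMobius η' F ∧
      ∀ ε > (0:ℝ), ∃ N : ℕ, ∀ ν ≥ N, ∀ z ∈ D (φ ν), dist (f (φ ν) z) (F z) ≤ ε) ∧
    (Tendsto (fun k => hausdorffDist (f k '' D k) (univ : Set Y)) atTop (nhds 0) →
      ∃ (η' : NNReal ≃ₜ NNReal) (F : X ≃ₜ Y) (φ : ℕ → ℕ), StrictMono φ ∧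
        IsQuasiMobius η' F ∧
        ∀ ε > (0:ℝ), ∃ N : ℕ, ∀ ν ≥ N, ∀ z ∈ D (φ ν), dist (f (φ ν) z) (F z) ≤ ε) := by
  classical
  haveI : Nonempty X := ⟨x 0 0⟩
  haveI : Nonempty Y := ⟨y 0 0⟩
  have hbX : Bornology.IsBounded (univ : Set X) := isCompact_univ.isBounded
  have hbY : Bornology.IsBounded (univ : Set Y) := isCompact_univ.isBounded
  set ΔX := Metric.diam (univ : Set X) with hΔXdef
  set ΔY := Metric.diam (univ : Set Y) with hΔYdef
  have hXle : ∀ a b : X, dist a b ≤ ΔX := fun a b => dist_le_diam_of_mem hbX trivial trivial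
  have hYle : ∀ a b : Y, dist a b ≤ ΔY := fun a b => dist_le_diam_of_mem hbY trivial trivial
  have hΔX : 0 < ΔX := lt_of_lt_of_le hδ ((hsepx 0 0 1 (by decide)).trans (hXle _ _))
  have hΔY : 0 < ΔY := lt_of_lt_of_le hδ ((hsepy 0 0 1 (by decide)).trans (hYle _ _))
  have hDne : ∀ k, (D k).Nonempty := fun k => ⟨x k 0, hxD k 0⟩
  -- approximate projections onto `D k`
  have hproj : ∀ (k : ℕ) (z : X), ∃ w ∈ D k,
      dist z w < hausdorffDist (D k) univ + 1/(k+1) := by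
    intro k z
    have hfin : EMetric.hausdorffEdist (univ : Set X) (D k) ≠ ⊤ :=
      Metric.hausdorffEdist_ne_top_of_nonempty_of_bounded univ_nonempty (hDne k)
        hbX (hbX.subset (subset_univ _))
    have hlt : hausdorffDist (univ : Set X) (D k) < hausdorffDist (D k) univ + 1/(k+1) := by
      rw [hausdorffDist_comm]
      have : (0:ℝ) < 1/(k+1) := by positivity
      linarith
    exact exists_dist_lt_of_hausdorffDist_lt (mem_univ z) hlt hfin
  choose p hpD hpdist using hproj
  set E : ℕ → ℝ := fun k => hausdorffDist (D k) univ + 1/(k+1) with hEdef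
  have hE0 : Tendsto E atTop (𝓝 0) := by
    have := hdense.add tendsto_one_div_add_atTop_nhds_zero_nat
    simpa [hEdef] using this
  -- equicontinuity
  have equi : ∀ ε : ℝ, 0 < ε → ∃ ρ : ℝ, 0 < ρ ∧ ρ ≤ δ/4 ∧
      ∀ k, ∀ a ∈ D k, ∀ b ∈ D k, dist a b ≤ ρ → dist (f k a) (f k b) ≤ ε := by
    intro ε hε
    have hcpos : (0:ℝ) < ε*δ/(ΔY*ΔY) := by positivity
    set c : NNReal := Real.toNNReal (ε*δ/(ΔY*ΔY)) with hcdef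
    have hc : 0 < c := Real.toNNReal_pos.mpr hcpos
    obtain ⟨t, ht, hts⟩ := eta_small η hc
    have htR : (0:ℝ) < (t:ℝ) := ht
    set ρ := min (δ/4) ((t:ℝ)*δ^2/(8*ΔX)) with hρdef
    have hρpos : 0 < ρ := lt_min (by linarith) (by positivity)
    refine ⟨ρ, hρpos, min_le_left _ _, ?_⟩
    intro k a ha b hb hab
    rcases eq_or_ne a b with rfl | hne
    · rw [dist_self]; exact hε.le
    obtain ⟨i, j, hij, hi, hj⟩ := exists_two_good (fun i => dist a (x k i) < δ/2)
      (by
        intro i j hij hBi hBj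
        have h1 := hsepx k i j hij
        have h2 := dist_triangle (x k i) a (x k j)
        rw [dist_comm (x k i) a] at h2
        linarith)
    simp only [not_lt] at hi hj
    have hau : δ/2 ≤ dist a (x k i) := hi
    have hav : δ/2 ≤ dist a (x k j) := hj
    have hρ4 : ρ ≤ δ/4 := min_le_left _ _
    have hbu : δ/4 ≤ dist b (x k i) := by
      have h2 := dist_triangle a b (x k i)
      linarith
    have hbv : δ/4 ≤ dist b (x k j) := by
      have h2 := dist_triangle a b (x k j)
      linarith
    have huv : δ ≤ dist (x k i) (x k j) := hsepx k i j hij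
    have hau' : a ≠ x k i := by intro h; rw [h, dist_self] at hau; linarith
    have hav' : a ≠ x k j := by intro h; rw [h, dist_self] at hav; linarith
    have hub' : x k i ≠ b := by intro h; rw [← h, dist_comm, dist_self] at hbu; linarith
    have huv' : x k i ≠ x k j := by intro h; rw [h, dist_self] at huv; linarith
    have hbv' : b ≠ x k j := by intro h; rw [h, dist_self] at hbv; linarith
    have hq := (hqm k).2 a ha (x k i) (hxD k i) b hb (x k j) (hxD k j)
      hau' hne hav' hub' huv' hbv'
    -- source cross-ratio bound
    have hsrc : crossRatio a (x k i) b (x k j) ≤ t := by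
      rw [← NNReal.coe_le_coe, crossRatio_coe]
      have hρ2 : ρ ≤ (t:ℝ)*δ^2/(8*ΔX) := min_le_right _ _
      calc dist a b * dist (x k i) (x k j) / (dist a (x k j) * dist (x k i) b)
          ≤ (ρ * ΔX) / ((δ/2) * (δ/4)) := by
            apply div_le_div₀ (by positivity)
            · exact mul_le_mul hab (hXle _ _) dist_nonneg hρpos.le
            · positivity
            · rw [dist_comm (x k i) b]
              exact mul_le_mul hav hbu (by linarith) dist_nonneg
        _ ≤ (t:ℝ) := by
            rw [div_le_iff₀ (by positivity)]
            have h1 : ρ * ΔX ≤ ((t:ℝ)*δ^2/(8*ΔX)) * ΔX :=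
              mul_le_mul_of_nonneg_right hρ2 hΔX.le
            have h2 : ((t:ℝ)*δ^2/(8*ΔX)) * ΔX = (t:ℝ)*δ^2/8 := by
              field_simp
            nlinarith [h1, h2]
    have hη : η (crossRatio a (x k i) b (x k j)) ≤ c := hts _ hsrc
    -- image cross-ratio lower bound
    have hfuv : δ ≤ dist (f k (x k i)) (f k (x k j)) := by
      rw [hfx k i, hfx k j]; exact hsepy k i j hij
    have hfav : 0 < dist (f k a) (f k (x k j)) := by
      rw [dist_pos]
      exact fun h => hav' ((hqm k).1 ha (hxD k j) h)
    have hfub : 0 < dist (f k (x k i)) (f k b) := by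
      rw [dist_pos]
      exact fun h => hub' ((hqm k).1 (hxD k i) hb h)
    have himg : dist (f k a) (f k b) * δ / (ΔY*ΔY)
        ≤ ((crossRatio (f k a) (f k (x k i)) (f k b) (f k (x k j)) : NNReal) : ℝ) := by
      rw [crossRatio_coe]
      apply div_le_div₀ (by positivity)
      · exact mul_le_mul_of_nonneg_left hfuv dist_nonneg
      · exact mul_pos hfav hfub
      · exact mul_le_mul (hYle _ _) (hYle _ _) dist_nonneg hΔY.le
    have hcc : ((c:NNReal):ℝ) = ε*δ/(ΔY*ΔY) := Real.coe_toNNReal _ hcpos.le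
    have hchain : dist (f k a) (f k b) * δ / (ΔY*ΔY) ≤ ε*δ/(ΔY*ΔY) := by
      calc dist (f k a) (f k b) * δ / (ΔY*ΔY)
          ≤ ((crossRatio (f k a) (f k (x k i)) (f k b) (f k (x k j)) : NNReal) : ℝ) := himg
        _ ≤ ((η (crossRatio a (x k i) b (x k j)) : NNReal) : ℝ) := NNReal.coe_le_coe.mpr hq
        _ ≤ ((c:NNReal):ℝ) := NNReal.coe_le_coe.mpr hη
        _ = ε*δ/(ΔY*ΔY) := hcc
    have := (div_le_div_iff_of_pos_right (c := ΔY*ΔY) (by positivity)).mp hchain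
    exact le_of_mul_le_mul_right this hδ
  -- dense sequence and subsequence extraction
  obtain ⟨S, hS⟩ := TopologicalSpace.exists_dense_seq X
  obtain ⟨L, φ, hφ, hGL⟩ := SeqCompactSpace.tendsto_subseq
    (fun k => fun n => f k (p k (S n)))
  have hGLpt : ∀ n, Tendsto (fun ν => f (φ ν) (p (φ ν) (S n))) atTop (𝓝 (L n)) := by
    intro n
    exact (tendsto_pi_nhds.mp hGL) n
  have hEφ : Tendsto (fun ν => E (φ ν)) atTop (𝓝 0) := hE0.comp hφ.tendsto_atTop
  -- uniform Cauchy property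
  have hUC : ∀ ε : ℝ, 0 < ε → ∃ N, ∀ ν ≥ N, ∀ μ ≥ N, ∀ z : X,
      dist (f (φ ν) (p (φ ν) z)) (f (φ μ) (p (φ μ) z)) ≤ ε := by
    intro ε hε
    obtain ⟨ρ, hρ, hρδ, hequi⟩ := equi (ε/3) (by positivity)
    have hcover : (univ : Set X) ⊆ ⋃ n, ball (S n) (ρ/4) := by
      intro z _
      obtain ⟨n, hn⟩ := hS.exists_dist_lt z (show (0:ℝ) < ρ/4 by linarith)
      exact mem_iUnion.mpr ⟨n, by rwa [mem_ball]⟩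
    obtain ⟨T, hT⟩ := isCompact_univ.elim_finite_subcover
      (fun n => ball (S n) (ρ/4)) (fun n => isOpen_ball) hcover
    have h1 : ∀ᶠ ν in atTop, E (φ ν) < ρ/4 :=
      hEφ.eventually_lt_const (show (0:ℝ) < ρ/4 by linarith)
    have h2 : ∀ᶠ ν in atTop, ∀ n ∈ T, dist (f (φ ν) (p (φ ν) (S n))) (L n) < ε/6 := by
      rw [eventually_all_finset]
      intro n _
      exact (tendsto_iff_dist_tendsto_zero.mp (hGLpt n)).eventually_lt_const
        (show (0:ℝ) < ε/6 by linarith)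
    obtain ⟨N, hN⟩ := eventually_atTop.mp (h1.and h2)
    refine ⟨N, fun ν hν μ hμ z => ?_⟩
    obtain ⟨n, hnT, hzn⟩ := mem_iUnion₂.mp (hT (mem_univ z))
    rw [mem_ball] at hzn
    -- both p-projections of z and S n are ρ-close
    have key : ∀ κ ≥ N, dist (f (φ κ) (p (φ κ) z)) (f (φ κ) (p (φ κ) (S n))) ≤ ε/3 := by
      intro κ hκ
      have hEκ := (hN κ hκ).1
      have e1 : dist (p (φ κ) z) (p (φ κ) (S n)) ≤ ρ := by
        have tri := dist_triangle4 (p (φ κ) z) z (S n) (p (φ κ) (S n))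
        have d1 : dist (p (φ κ) z) z < ρ/4 := by
          rw [dist_comm]; exact lt_of_lt_of_le (hpdist (φ κ) z) hEκ.le
        have d2 : dist (S n) (p (φ κ) (S n)) < ρ/4 :=
          lt_of_lt_of_le (hpdist (φ κ) (S n)) hEκ.le
        linarith
      exact hequi (φ κ) _ (hpD _ _) _ (hpD _ _) e1
    have k1 := key ν hν
    have k2 := key μ hμ
    have k3 := (hN ν hν).2 n hnT
    have k4 := (hN μ hμ).2 n hnT
    have tri := dist_triangle4 (f (φ ν) (p (φ ν) z)) (f (φ ν) (p (φ ν) (S n)))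
      (f (φ μ) (p (φ μ) (S n))) (f (φ μ) (p (φ μ) z))
    have tri2 := dist_triangle (f (φ ν) (p (φ ν) (S n))) (L n) (f (φ μ) (p (φ μ) (S n)))
    rw [dist_comm (f (φ μ) (p (φ μ) (S n))) (f (φ μ) (p (φ μ) z))] at tri
    rw [dist_comm (L n) (f (φ μ) (p (φ μ) (S n)))] at tri2
    linarith
  -- definition of the limit map F
  have hcauchy : ∀ z : X, ∃ yz : Y, Tendsto (fun ν => f (φ ν) (p (φ ν) z)) atTop (𝓝 yz) := by
    intro z
    apply cauchySeq_tendsto_of_complete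
    rw [Metric.cauchySeq_iff]
    intro ε hε
    obtain ⟨N, hN⟩ := hUC (ε/2) (by positivity)
    exact ⟨N, fun m hm n hn => lt_of_le_of_lt (hN m hm n hn z) (by linarith)⟩
  choose F hF using hcauchy
  -- uniform convergence of the extended maps to F
  have hFunif : ∀ ε : ℝ, 0 < ε → ∃ N, ∀ ν ≥ N, ∀ z : X,
      dist (f (φ ν) (p (φ ν) z)) (F z) ≤ ε := by
    intro ε hε
    obtain ⟨N, hN⟩ := hUC ε hε
    refine ⟨N, fun ν hν z => ?_⟩
    have h1 : Tendsto (fun μ => dist (f (φ ν) (p (φ ν) z)) (f (φ μ) (p (φ μ) z)))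
        atTop (𝓝 (dist (f (φ ν) (p (φ ν) z)) (F z))) := tendsto_const_nhds.dist (hF z)
    apply le_of_tendsto h1
    filter_upwards [eventually_ge_atTop N] with μ hμ
    exact hN ν hν μ hμ z
  -- convergence on the sets D (φ ν)
  have hconv : ∀ ε > (0:ℝ), ∃ N : ℕ, ∀ ν ≥ N, ∀ z ∈ D (φ ν),
      dist (f (φ ν) z) (F z) ≤ ε := by
    intro ε hε
    obtain ⟨ρ, hρ, hρδ, hequi⟩ := equi (ε/2) (by positivity)
    obtain ⟨N1, hN1⟩ := eventually_atTop.mp (hEφ.eventually_lt_const hρ)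
    obtain ⟨N2, hN2⟩ := hFunif (ε/2) (by positivity)
    refine ⟨max N1 N2, fun ν hν z hz => ?_⟩
    have e1 : dist z (p (φ ν) z) ≤ ρ :=
      (lt_of_lt_of_le (hpdist (φ ν) z) (hN1 ν (le_trans (le_max_left _ _) hν)).le).le
    have e2 : dist (f (φ ν) z) (f (φ ν) (p (φ ν) z)) ≤ ε/2 :=
      hequi (φ ν) _ hz _ (hpD _ _) e1
    have e3 := hN2 ν (le_trans (le_max_right _ _) hν) z
    have tri := dist_triangle (f (φ ν) z) (f (φ ν) (p (φ ν) z)) (F z)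
    linarith
  -- p-projections converge pointwise to the identity
  have hpt : ∀ z : X, Tendsto (fun ν => p (φ ν) z) atTop (𝓝 z) := by
    intro z
    rw [tendsto_iff_dist_tendsto_zero]
    refine squeeze_zero (fun _ => dist_nonneg) (fun ν => ?_) hEφ
    rw [dist_comm]
    exact (hpdist (φ ν) z).le
  -- injectivity of F
  have hFinj : Function.Injective F := by
    intro a b hab
    by_contra hne
    have hd : 0 < dist a b := dist_pos.mpr hne
    set M : NNReal := Real.toNNReal (ΔX*ΔX/((dist a b/2)*δ)) with hMdef
    obtain ⟨Bb, hBb⟩ : ∃ Bb : NNReal, ∀ s ≤ M, η s ≤ Bb := by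
      obtain ⟨Bb, hBb'⟩ :=
        ((isCompact_Icc (a := (0:NNReal)) (b := M)).image η.continuous).bddAbove
      exact ⟨Bb, fun s hs => hBb' ⟨s, ⟨zero_le, hs⟩, rfl⟩⟩
    set ε₁ : ℝ := (δ^2/16)/(((Bb:ℝ)+1)*ΔY) with hε₁def
    have hBb0 : (0:ℝ) ≤ (Bb:ℝ) := Bb.coe_nonneg
    have hε₁ : 0 < ε₁ := by
      apply div_pos (by nlinarith) (mul_pos (by linarith) hΔY)
    have ev1 : ∀ᶠ ν in atTop, dist (f (φ ν) (p (φ ν) a)) (F a) < δ/12 :=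
      (tendsto_iff_dist_tendsto_zero.mp (hF a)).eventually_lt_const (by linarith)
    have ev2 : ∀ᶠ ν in atTop, dist (f (φ ν) (p (φ ν) b)) (F a) < δ/12 := by
      have ht : Tendsto (fun ν => dist (f (φ ν) (p (φ ν) b)) (F a)) atTop
          (𝓝 (dist (F b) (F a))) := (hF b).dist tendsto_const_nhds
      rw [← hab, dist_self] at ht
      exact ht.eventually_lt_const (by linarith)
    have ev3 : ∀ᶠ ν in atTop,
        dist (f (φ ν) (p (φ ν) a)) (f (φ ν) (p (φ ν) b)) < ε₁ := by
      have ht := (hF a).dist (hF b)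
      rw [hab, dist_self] at ht
      exact ht.eventually_lt_const hε₁
    have ev4 : ∀ᶠ ν in atTop, dist a b / 2 < dist (p (φ ν) a) (p (φ ν) b) :=
      ((hpt a).dist (hpt b)).eventually_const_lt (by linarith)
    obtain ⟨ν, hh⟩ := (((ev1.and ev2).and ev3).and ev4).exists
    obtain ⟨⟨⟨h1, h2⟩, h3⟩, h4⟩ := hh
    obtain ⟨i, j, hij, hi, hj⟩ := exists_two_good (fun i => dist (y (φ ν) i) (F a) < δ/3)
      (by
        intro i j hij hBi hBj
        have hs := hsepy (φ ν) i j hij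
        have h2' := dist_triangle (y (φ ν) i) (F a) (y (φ ν) j)
        rw [dist_comm (F a) (y (φ ν) j)] at h2'
        linarith)
    simp only [not_lt] at hi hj
    have hfu : f (φ ν) (x (φ ν) i) = y (φ ν) i := hfx _ i
    have hfv : f (φ ν) (x (φ ν) j) = y (φ ν) j := hfx _ j
    have hab' : p (φ ν) a ≠ p (φ ν) b := by
      intro h; rw [h, dist_self] at h4; linarith
    have hane : ∀ m : Fin 3, δ/3 ≤ dist (y (φ ν) m) (F a) → p (φ ν) a ≠ x (φ ν) m := by
      intro m hm h
      rw [← hfx _ m, ← h] at hm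
      linarith
    have hbne : ∀ m : Fin 3, δ/3 ≤ dist (y (φ ν) m) (F a) → p (φ ν) b ≠ x (φ ν) m := by
      intro m hm h
      rw [← hfx _ m, ← h] at hm
      linarith
    have hau' : p (φ ν) a ≠ x (φ ν) i := hane i hi
    have hav' : p (φ ν) a ≠ x (φ ν) j := hane j hj
    have hbu' : p (φ ν) b ≠ x (φ ν) i := hbne i hi
    have hbv' : p (φ ν) b ≠ x (φ ν) j := hbne j hj
    have huv : δ ≤ dist (x (φ ν) i) (x (φ ν) j) := hsepx _ i j hij
    have huv' : x (φ ν) i ≠ x (φ ν) j := by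
      intro h; rw [h, dist_self] at huv; linarith
    have hq := (hqm (φ ν)).2 (p (φ ν) a) (hpD _ _) (x (φ ν) i) (hxD _ i)
      (x (φ ν) j) (hxD _ j) (p (φ ν) b) (hpD _ _)
      hau' hav' hab' huv' (Ne.symm hbu') (Ne.symm hbv')
    -- source bound
    have hMn : (0:ℝ) ≤ ΔX*ΔX/((dist a b/2)*δ) :=
      le_of_lt (div_pos (mul_pos hΔX hΔX) (mul_pos (by linarith) hδ))
    have hsrc : crossRatio (p (φ ν) a) (x (φ ν) i) (x (φ ν) j) (p (φ ν) b) ≤ M := by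
      rw [← NNReal.coe_le_coe, crossRatio_coe, hMdef, Real.coe_toNNReal _ hMn]
      apply div_le_div₀ (mul_pos hΔX hΔX).le
      · exact mul_le_mul (hXle _ _) (hXle _ _) dist_nonneg hΔX.le
      · exact mul_pos (by linarith) hδ
      · exact mul_le_mul h4.le huv hδ.le dist_nonneg
    have hηs : η (crossRatio (p (φ ν) a) (x (φ ν) i) (x (φ ν) j) (p (φ ν) b)) ≤ Bb :=
      hBb _ hsrc
    -- image lower bound
    have hd0 : 0 < dist (f (φ ν) (p (φ ν) a)) (f (φ ν) (p (φ ν) b)) :=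
      dist_pos.mpr (fun h => hab' ((hqm (φ ν)).1 (hpD _ _) (hpD _ _) h))
    have hduv : δ ≤ dist (f (φ ν) (x (φ ν) i)) (f (φ ν) (x (φ ν) j)) := by
      rw [hfu, hfv]; exact hsepy _ i j hij
    have hfav : δ/4 ≤ dist (f (φ ν) (p (φ ν) a)) (f (φ ν) (x (φ ν) j)) := by
      rw [hfv, dist_comm]
      have h2' := dist_triangle (y (φ ν) j) (f (φ ν) (p (φ ν) a)) (F a)
      linarith
    have hfub : δ/4 ≤ dist (f (φ ν) (x (φ ν) i)) (f (φ ν) (p (φ ν) b)) := by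
      rw [hfu]
      have h2' := dist_triangle (y (φ ν) i) (f (φ ν) (p (φ ν) b)) (F a)
      rw [dist_comm (y (φ ν) i) (f (φ ν) (p (φ ν) b))] at h2'
      rw [dist_comm]
      linarith
    have himglb : (δ/4)*(δ/4)/(ε₁*ΔY) ≤
        ((crossRatio (f (φ ν) (p (φ ν) a)) (f (φ ν) (x (φ ν) i))
          (f (φ ν) (x (φ ν) j)) (f (φ ν) (p (φ ν) b)) : NNReal) : ℝ) := by
      rw [crossRatio_coe]
      apply div_le_div₀ (mul_nonneg dist_nonneg dist_nonneg)
      · exact mul_le_mul hfav hfub (by linarith) dist_nonneg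
      · exact mul_pos hd0 (by linarith)
      · exact mul_le_mul h3.le (hYle _ _) dist_nonneg hε₁.le
    have hδ' : δ ≠ 0 := hδ.ne'
    have hΔY' : ΔY ≠ 0 := hΔY.ne'
    have hBb1 : (Bb:ℝ)+1 ≠ 0 := by linarith
    have hcomp : (δ/4)*(δ/4)/(ε₁*ΔY) = (Bb:ℝ)+1 := by
      rw [hε₁def]
      field_simp
      ring
    have hfin := le_trans himglb
      (le_trans (NNReal.coe_le_coe.mpr hq) (NNReal.coe_le_coe.mpr hηs))
    rw [hcomp] at hfin
    linarith
  -- F is quasi-Möbius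
  have hFqm : IsQuasiMobius η F := by
    refine ⟨hFinj, fun x₁ x₂ x₃ x₄ h12 h13 h14 h23 h24 h34 => ?_⟩
    have hden : (nndist (F x₁) (F x₄) * nndist (F x₂) (F x₃) : NNReal) ≠ 0 := by
      apply mul_ne_zero
      · rw [ne_eq, nndist_eq_zero]; exact fun h => h14 (hFinj h)
      · rw [ne_eq, nndist_eq_zero]; exact fun h => h23 (hFinj h)
    have hLHS : Tendsto (fun ν => crossRatio (f (φ ν) (p (φ ν) x₁))
        (f (φ ν) (p (φ ν) x₂)) (f (φ ν) (p (φ ν) x₃)) (f (φ ν) (p (φ ν) x₄))) atTop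
        (𝓝 (crossRatio (F x₁) (F x₂) (F x₃) (F x₄))) := by
      have h13' := (hF x₁).nndist (hF x₃)
      have h24' := (hF x₂).nndist (hF x₄)
      have h14' := (hF x₁).nndist (hF x₄)
      have h23' := (hF x₂).nndist (hF x₃)
      have := (h13'.mul h24').div (h14'.mul h23') hden
      simpa [crossRatio, Pi.div_def] using this
    have hsden : (nndist x₁ x₄ * nndist x₂ x₃ : NNReal) ≠ 0 := by
      apply mul_ne_zero
      · rw [ne_eq, nndist_eq_zero]; exact h14
      · rw [ne_eq, nndist_eq_zero]; exact h23
    have hsrc_t : Tendsto (fun ν => crossRatio (p (φ ν) x₁) (p (φ ν) x₂)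
        (p (φ ν) x₃) (p (φ ν) x₄)) atTop (𝓝 (crossRatio x₁ x₂ x₃ x₄)) := by
      have h13' := (hpt x₁).nndist (hpt x₃)
      have h24' := (hpt x₂).nndist (hpt x₄)
      have h14' := (hpt x₁).nndist (hpt x₄)
      have h23' := (hpt x₂).nndist (hpt x₃)
      have := (h13'.mul h24').div (h14'.mul h23') hsden
      simpa [crossRatio, Pi.div_def] using this
    have hRHS : Tendsto (fun ν => η (crossRatio (p (φ ν) x₁) (p (φ ν) x₂)
        (p (φ ν) x₃) (p (φ ν) x₄))) atTop (𝓝 (η (crossRatio x₁ x₂ x₃ x₄))) :=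
      (η.continuous.tendsto _).comp hsrc_t
    have hev : ∀ᶠ ν in atTop, crossRatio (f (φ ν) (p (φ ν) x₁))
        (f (φ ν) (p (φ ν) x₂)) (f (φ ν) (p (φ ν) x₃)) (f (φ ν) (p (φ ν) x₄)) ≤
        η (crossRatio (p (φ ν) x₁) (p (φ ν) x₂) (p (φ ν) x₃) (p (φ ν) x₄)) := by
      have e12 := ((hpt x₁).dist (hpt x₂)).eventually_const_lt (dist_pos.mpr h12)
      have e13 := ((hpt x₁).dist (hpt x₃)).eventually_const_lt (dist_pos.mpr h13)
      have e14 := ((hpt x₁).dist (hpt x₄)).eventually_const_lt (dist_pos.mpr h14)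
      have e23 := ((hpt x₂).dist (hpt x₃)).eventually_const_lt (dist_pos.mpr h23)
      have e24 := ((hpt x₂).dist (hpt x₄)).eventually_const_lt (dist_pos.mpr h24)
      have e34 := ((hpt x₃).dist (hpt x₄)).eventually_const_lt (dist_pos.mpr h34)
      filter_upwards [e12, e13, e14, e23, e24, e34] with ν d12 d13 d14 d23 d24 d34
      exact (hqm (φ ν)).2 _ (hpD _ _) _ (hpD _ _) _ (hpD _ _) _ (hpD _ _)
        (dist_pos.mp d12) (dist_pos.mp d13) (dist_pos.mp d14)
        (dist_pos.mp d23) (dist_pos.mp d24) (dist_pos.mp d34)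
    exact le_of_tendsto_of_tendsto hLHS hRHS hev
  -- continuity of F
  have hFcont : Continuous F := by
    rw [Metric.continuous_iff]
    intro b0 ε hε
    obtain ⟨ρ, hρ, hρδ, hequi⟩ := equi (ε/3) (by linarith)
    obtain ⟨N2, hN2⟩ := hFunif (ε/4) (by linarith)
    obtain ⟨N1, hN1⟩ := eventually_atTop.mp
      (hEφ.eventually_lt_const (show (0:ℝ) < ρ/4 by linarith))
    refine ⟨ρ/4, by linarith, fun a hab => ?_⟩
    set ν := max N1 N2 with hνdef
    have h1 := hN2 ν (le_max_right _ _) a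
    have h2 := hN2 ν (le_max_right _ _) b0
    have hEν := hN1 ν (le_max_left _ _)
    have h3 : dist (p (φ ν) a) (p (φ ν) b0) ≤ ρ := by
      have tri := dist_triangle4 (p (φ ν) a) a b0 (p (φ ν) b0)
      have d1 : dist (p (φ ν) a) a < ρ/4 := by
        rw [dist_comm]; exact lt_of_lt_of_le (hpdist _ a) hEν.le
      have d2 : dist b0 (p (φ ν) b0) < ρ/4 := lt_of_lt_of_le (hpdist _ b0) hEν.le
      linarith
    have h4 : dist (f (φ ν) (p (φ ν) a)) (f (φ ν) (p (φ ν) b0)) ≤ ε/3 :=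
      hequi (φ ν) _ (hpD _ _) _ (hpD _ _) h3
    have tri := dist_triangle4 (F a) (f (φ ν) (p (φ ν) a))
      (f (φ ν) (p (φ ν) b0)) (F b0)
    rw [dist_comm (F a) (f (φ ν) (p (φ ν) a))] at tri
    linarith
  refine ⟨⟨η, F, φ, hφ, hFqm, hconv⟩, fun himg => ?_⟩
  -- surjectivity under the density assumption on images
  have hsurj : Function.Surjective F := by
    intro y0
    have hy0 : y0 ∈ closure (range F) := by
      rw [Metric.mem_closure_iff]
      intro ε hε
      obtain ⟨N1, hN1⟩ := hconv (ε/3) (by linarith)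
      have himgφ : Tendsto (fun ν => hausdorffDist (f (φ ν) '' D (φ ν)) univ)
          atTop (𝓝 0) := himg.comp hφ.tendsto_atTop
      obtain ⟨N2, hN2⟩ := eventually_atTop.mp
        (himgφ.eventually_lt_const (show (0:ℝ) < ε/3 by linarith))
      set ν := max N1 N2 with hνdef
      have hfin : EMetric.hausdorffEdist (univ : Set Y) (f (φ ν) '' D (φ ν)) ≠ ⊤ :=
        Metric.hausdorffEdist_ne_top_of_nonempty_of_bounded univ_nonempty
          ((hDne _).image _) hbY (hbY.subset (subset_univ _))
      have hlt : hausdorffDist (univ : Set Y) (f (φ ν) '' D (φ ν)) < ε/3 := by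
        rw [hausdorffDist_comm]; exact hN2 ν (le_max_right _ _)
      obtain ⟨w, hw, hyw⟩ := exists_dist_lt_of_hausdorffDist_lt (mem_univ y0) hlt hfin
      obtain ⟨z, hz, rfl⟩ := hw
      refine ⟨F z, mem_range_self z, ?_⟩
      have hc := hN1 ν (le_max_left _ _) z hz
      have tri := dist_triangle y0 (f (φ ν) z) (F z)
      linarith
    rw [(isCompact_range hFcont).isClosed.closure_eq] at hy0
    exact hy0
  let e : X ≃ Y := Equiv.ofBijective F ⟨hFinj, hsurj⟩
  have hecont : Continuous e := hFcont
  let H : X ≃ₜ Y := hecont.homeoOfEquivCompactToT2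
  refine ⟨η, H, φ, hφ, ?_, ?_⟩
  · exact hFqm
  · exact hconv
end
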